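/- For a Gaussian process with kernel k(θ, x, x') = θ · k₀(x, x') where θ > 0 is a signal-variance hyperparameter and k₀ is a fixed positive-definite kernel, the posterior variance σ²(θ, x*) = θ k₀(x*,x*) − θ² k₀(x*)ᵀ(θ K₀ + σ₀² I)⁻¹ k₀(x*) + σ₀² is monotone nondecreasing in θ > 0, for any training inputs x₁,…,x_N, noise variance σ₀² > 0, and test input x*. -/

import Mathlib

open Matrix

lemma aux_pd {N : ℕ} {K₀ : Matrix (Fin N) (Fin N) ℝ} (hK₀ : K₀.PosSemidef)
    {t s : ℝ} (ht : 0 ≤ t) (hs : 0 < s) :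
    (t • K₀ + s • (1 : Matrix (Fin N) (Fin N) ℝ)).PosDef := by
  refine Matrix.PosDef.posSemidef_add ?_ ?_
  · refine posSemidef_iff_dotProduct_mulVec.mpr ⟨?_, fun x => ?_⟩
    · unfold Matrix.IsHermitian
      rw [conjTranspose_smul, hK₀.isHermitian]; simp
    · rw [smul_mulVec, dotProduct_smul, smul_eq_mul]
      exact mul_nonneg ht (hK₀.dotProduct_mulVec_nonneg x)
  · refine posDef_iff_dotProduct_mulVec.mpr ⟨?_, fun x hx => ?_⟩
    · unfold Matrix.IsHermitian
      rw [conjTranspose_smul, conjTranspose_one]; simp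
    · rw [smul_mulVec, one_mulVec, dotProduct_smul, smul_eq_mul]
      have h1 : (0:ℝ) < star x ⬝ᵥ x := dotProduct_star_self_pos_iff.mpr hx
      exact mul_pos hs (by simpa [star_trivial] using h1)

lemma aux_inv {N : ℕ} {A : Matrix (Fin N) (Fin N) ℝ} (hA : A.PosDef) (k : Fin N → ℝ) :
    A *ᵥ (A⁻¹ *ᵥ k) = k := by
  rw [mulVec_mulVec, Matrix.mul_nonsing_inv _ (isUnit_iff_isUnit_det A |>.mp hA.isUnit),
    one_mulVec]

-- symmetry: x ⬝ᵥ A *ᵥ y = (A *ᵥ x) ⬝ᵥ y for hermitian real A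
lemma aux_symm {N : ℕ} {A : Matrix (Fin N) (Fin N) ℝ} (hA : A.IsHermitian)
    (x y : Fin N → ℝ) : x ⬝ᵥ A *ᵥ y = (A *ᵥ x) ⬝ᵥ y := by
  have hT : Aᵀ = A := by
    have := hA; unfold Matrix.IsHermitian at this
    simpa using this
  rw [Matrix.dotProduct_mulVec, ← vecMul_transpose, hT]


/-- for the kernel `k(θ,·,·) = θ·k₀(·,·)` with signal variance `θ > 0`, the GP
posterior variance `θ k₀(x*,x*) − θ² k₀(x*)ᵀ(θK₀ + σ₀²I)⁻¹ k₀(x*) + σ₀²` is monotone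
nondecreasing in `θ`. The PSD structure of the kernel is encoded by the bordered Gram
quadratic-form condition `hGram`. -/
theorem stmt_8 (N : ℕ) (K₀ : Matrix (Fin N) (Fin N) ℝ) (hK₀ : K₀.PosSemidef)
    (k : Fin N → ℝ) (k00 : ℝ)
    (hGram : ∀ (v : Fin N → ℝ) (t : ℝ),
      0 ≤ v ⬝ᵥ K₀.mulVec v + 2 * t * (k ⬝ᵥ v) + t ^ 2 * k00)
    (σ0 : ℝ) (hσ0 : 0 < σ0) :
    ∀ θ θ' : ℝ, 0 < θ → θ ≤ θ' →
      θ * k00 - θ ^ 2 * (k ⬝ᵥ (θ • K₀ + σ0 ^ 2 • (1 : Matrix (Fin N) (Fin N) ℝ))⁻¹.mulVec k)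
          + σ0 ^ 2
        ≤ θ' * k00
            - θ' ^ 2 * (k ⬝ᵥ (θ' • K₀ + σ0 ^ 2 • (1 : Matrix (Fin N) (Fin N) ℝ))⁻¹.mulVec k)
            + σ0 ^ 2 := by
  intro θ θ' hθ hle
  have hθ' : 0 < θ' := hθ.trans_le hle
  have hs : (0:ℝ) < σ0 ^ 2 := pow_pos hσ0 2
  set A : ℝ → Matrix (Fin N) (Fin N) ℝ :=
    fun t => t • K₀ + σ0 ^ 2 • (1 : Matrix (Fin N) (Fin N) ℝ) with hA
  have hAθ : (A θ).PosDef := aux_pd hK₀ hθ.le hs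
  have hAθ' : (A θ').PosDef := aux_pd hK₀ hθ'.le hs
  set w : Fin N → ℝ := (A θ')⁻¹ *ᵥ k with hw
  set k' : Fin N → ℝ := (A θ)⁻¹ *ᵥ k with hk'def
  set a : ℝ := k ⬝ᵥ k' with ha
  set b : ℝ := k ⬝ᵥ w with hb
  set c : ℝ := w ⬝ᵥ K₀ *ᵥ w with hc
  set d : ℝ := w ⬝ᵥ w with hd
  have hwk : (A θ') *ᵥ w = k := aux_inv hAθ' k
  have hkk : (A θ) *ᵥ k' = k := aux_inv hAθ k
  have hexp : ∀ t : ℝ, (A t) *ᵥ w = t • (K₀ *ᵥ w) + σ0 ^ 2 • w := by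
    intro t
    rw [hA]
    rw [add_mulVec, smul_mulVec, smul_mulVec, one_mulVec]
  -- F2 : b = θ' * c + σ0^2 * d
  have hF2 : b = θ' * c + σ0 ^ 2 * d := by
    have h1 : w ⬝ᵥ k = θ' * c + σ0 ^ 2 * d := by
      rw [← hwk, hexp θ']
      simp [dotProduct_add, dotProduct_smul, smul_eq_mul, hc, hd]
    rw [hb, dotProduct_comm, h1]
  -- F3 : 0 ≤ θ'^2*(θ*c + σ0^2*d) - 2*θ*θ'*b + θ^2*a
  have hF3 : 0 ≤ θ' ^ 2 * (θ * c + σ0 ^ 2 * d) - 2 * θ * θ' * b + θ ^ 2 * a := by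
    have hq := hAθ.posSemidef.dotProduct_mulVec_nonneg (θ • k' - θ' • w)
    have hkey : (θ • k' - θ' • w) ⬝ᵥ (A θ) *ᵥ (θ • k' - θ' • w)
        = θ' ^ 2 * (θ * c + σ0 ^ 2 * d) - 2 * θ * θ' * b + θ ^ 2 * a := by
      have h1 : (A θ) *ᵥ (θ • k' - θ' • w) = θ • k - θ' • ((A θ) *ᵥ w) := by
        rw [mulVec_sub, mulVec_smul, mulVec_smul, hkk]
      rw [h1]
      have h2 : k' ⬝ᵥ ((A θ) *ᵥ w) = b := by
        rw [aux_symm hAθ.isHermitian, hkk, hb]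
      have h3 : w ⬝ᵥ ((A θ) *ᵥ w) = θ * c + σ0 ^ 2 * d := by
        rw [hexp θ]
        simp [dotProduct_add, dotProduct_smul, smul_eq_mul, hc, hd]
      have h4 : k' ⬝ᵥ k = a := by rw [ha, dotProduct_comm]
      have h5 : w ⬝ᵥ k = b := by rw [hb, dotProduct_comm]
      simp only [dotProduct_sub, sub_dotProduct, dotProduct_smul, smul_dotProduct,
        smul_eq_mul, h2, h3, h4, h5]
      ring
    simp only [star_trivial] at hq
    rwa [hkey] at hq
  have hF1 : 0 ≤ θ' ^ 2 * c - 2 * θ' * b + k00 := by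
    have := hGram (-(θ' • w)) 1
    have hquad : (-(θ' • w)) ⬝ᵥ K₀ *ᵥ (-(θ' • w)) = θ' ^ 2 * c := by
      rw [mulVec_neg, mulVec_smul]
      simp [dotProduct_smul, smul_eq_mul, hc]
      ring
    have hlin : k ⬝ᵥ (-(θ' • w)) = -(θ' * b) := by
      simp [dotProduct_smul, smul_eq_mul, hb]
    rw [hquad, hlin] at this
    linarith
  -- combine
  have hgoal : θ * k00 - θ ^ 2 * a ≤ θ' * k00 - θ' ^ 2 * b := by
    nlinarith [mul_nonneg (sub_nonneg.mpr hle) hF1, hF3, hF2, sq_nonneg θ']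
  simpa [ha, hb, hk'def, hw, hA, Matrix.mulVec] using by linarith [hgoal]
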